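/- Let $U \in \mathbb{Q}[[s]]$ be a formal power series with zero constant term satisfying $U = \frac{s}{3} + \frac{1}{2}U^2 + \frac{s}{3}\,(5D+1)(5D-1)\,U$, where $D = s\frac{d}{ds}$. Then the following differential equation holds: $\frac{4}{15}\,(5D-3)(5D-5)(5D-7)(5D-9)(5D-11)\,\big(s^2 U\big) = -(5D-3)\big(6U^2 - 2U^3\big) + 12\,(D-1)\big(U - \tfrac{s}{3}\big) - 28\,s^2$. -/

import Mathlib

open PowerSeries

/-- The Euler operator `D = s * d/ds` on formal power series over `ℚ`. -/
noncomputable def eulerD (U : PowerSeries ℚ) : PowerSeries ℚ :=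
  X * PowerSeries.derivative ℚ U

/-- The operator `5D - c` on formal power series over `ℚ`. -/
noncomputable def fD (c : ℚ) (V : PowerSeries ℚ) : PowerSeries ℚ :=
  5 * eulerD V - C c * V

private theorem d_ofNat (n : ℕ) [n.AtLeastTwo] :
    PowerSeries.derivative ℚ (OfNat.ofNat n : PowerSeries ℚ) = 0 := by
  rw [← map_ofNat (C) n]
  exact derivative_C

private theorem dmul (f g : PowerSeries ℚ) :
    PowerSeries.derivative ℚ (f * g)
      = f * PowerSeries.derivative ℚ g + g * PowerSeries.derivative ℚ f := by
  rw [Derivation.leibniz, smul_eq_mul, smul_eq_mul]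

private theorem dpow2 (f : PowerSeries ℚ) :
    PowerSeries.derivative ℚ (f ^ 2) = 2 * (f * PowerSeries.derivative ℚ f) := by
  have h := dmul f f
  rw [show f * f = f ^ 2 by ring] at h
  rw [h]; ring

private theorem dpow3 (f : PowerSeries ℚ) :
    PowerSeries.derivative ℚ (f ^ 3) = 3 * (f ^ 2 * PowerSeries.derivative ℚ f) := by
  have h := dmul (f ^ 2) f
  rw [show f ^ 2 * f = f ^ 3 by ring, dpow2] at h
  rw [h]; ring

set_option maxHeartbeats 4000000 in
theorem stmt_2 (U : PowerSeries ℚ) (hU0 : constantCoeff U = 0)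
    (hU : U = C (1/3) * X + C (1/2) * U ^ 2
        + C (1/3) * X * (25 * eulerD (eulerD U) - U)) :
    C (4/15) * fD 3 (fD 5 (fD 7 (fD 9 (fD 11 (X ^ 2 * U)))))
      = -(fD 3 (6 * U ^ 2 - 2 * U ^ 3))
        + 12 * (eulerD (U - C (1/3) * X) - (U - C (1/3) * X))
        - 28 * X ^ 2 := by
  have fa : (3 : PowerSeries ℚ) * C (1/3) = 1 := by
    rw [show (3 : PowerSeries ℚ) = C 3 from (map_ofNat (C) 3).symm, ← map_mul]
    norm_num
  have fb : (2 : PowerSeries ℚ) * C (1/2) = 1 := by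
    rw [show (2 : PowerSeries ℚ) = C 2 from (map_ofNat (C) 2).symm, ← map_mul]
    norm_num
  have hc : (15 : PowerSeries ℚ) * C (4/15) = 4 := by
    rw [show (15 : PowerSeries ℚ) = C 15 from (map_ofNat (C) 15).symm, ← map_mul]
    norm_num
    exact map_ofNat _ _
  have hU6 : 6 * U = 2 * X + 3 * (U * U) + 50 * (X * eulerD (eulerD U)) - 2 * (X * U) := by
    linear_combination (6 : PowerSeries ℚ) * hU
      + (2 * X + 2 * (X * (25 * eulerD (eulerD U) - U))) * fa + (3 * (U * U)) * fb
  have h15 : (15 : PowerSeries ℚ) ≠ 0 := by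
    intro h
    have h2 := congrArg (constantCoeff) h
    simp only [map_ofNat, map_zero] at h2
    norm_num at h2
  apply mul_left_cancel₀ h15
  rw [← mul_assoc, hc]
  have d2' : PowerSeries.derivative ℚ (2 : PowerSeries ℚ) = 0 := d_ofNat 2
  have d3' : PowerSeries.derivative ℚ (3 : PowerSeries ℚ) = 0 := d_ofNat 3
  have d5' : PowerSeries.derivative ℚ (5 : PowerSeries ℚ) = 0 := d_ofNat 5
  have d6' : PowerSeries.derivative ℚ (6 : PowerSeries ℚ) = 0 := d_ofNat 6
  have d50' : PowerSeries.derivative ℚ (50 : PowerSeries ℚ) = 0 := d_ofNat 50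
  have d7' : PowerSeries.derivative ℚ (7 : PowerSeries ℚ) = 0 := d_ofNat 7
  have d9' : PowerSeries.derivative ℚ (9 : PowerSeries ℚ) = 0 := d_ofNat 9
  have d11' : PowerSeries.derivative ℚ (11 : PowerSeries ℚ) = 0 := d_ofNat 11
  have h1 := congrArg (PowerSeries.derivative ℚ) hU6
  have h2 := congrArg (PowerSeries.derivative ℚ) h1
  have h3 := congrArg (PowerSeries.derivative ℚ) h2
  simp only [fD, eulerD] at hU6 h1 h2 h3 ⊢
  simp only [map_add, map_sub, map_ofNat, dmul, dpow2, dpow3, derivative_X, derivative_C,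
    d_ofNat, d2', d3', d5', d6', d50', d7', d9', d11', mul_zero, zero_mul, add_zero, zero_add, mul_one, one_mul] at hU6 h1 h2 h3 ⊢
  linear_combination (30 - 30 * U + 90 * (X * PowerSeries.derivative ℚ U)) * hU6
    + (-(30 * X) + 30 * (X * U) - 210 * X ^ 2) * h1
    + (-(750 * X ^ 3)) * h2 + (-(250 * X ^ 4)) * h3
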